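/- Suppose two families of inequalities hold: (a) γ²∑_{i₁,i₂}‖ũ(i₁,i₂)‖² + ∑_{i₁,i₂} ỹ_C(i₁,i₂)ᵀ Q_C ỹ_C(i₁,i₂) ≥ 0 (incremental dissipativity of the convolutional part with supply Q_C ⪯ 0), and (b) v ᵀ R_L v − ‖ỹ_L‖² ≥ 0 where R_L = diag(−Q_C,...,−Q_C) and v is the flattening of the signal ỹ_C (incremental dissipativity of the linear part). Then γ²∑_{i₁,i₂}‖ũ(i₁,i₂)‖² − ‖ỹ_L‖² ≥ 0, i.e., the overall incremental gain is at most γ. -/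
import Mathlib


open Matrix

/-- combining incremental dissipativity of the convolutional part
(with supply matrix Q_C ⪯ 0) and of the linear part (with R_L built from -Q_C)
yields the overall incremental gain bound γ. -/
theorem combined_incremental_gain_bound
    (c₀ c p : ℕ) (γ : ℝ) (hγ : 0 ≤ γ)
    (QC : Matrix (Fin c) (Fin c) ℝ) (hQCsymm : QC.IsSymm) (hQC : (-QC).PosSemidef)
    (ut : ℤ × ℤ → EuclideanSpace ℝ (Fin c₀))
    (yC : ℤ × ℤ → (Fin c → ℝ))
    (yL : EuclideanSpace ℝ (Fin p))
    (hu : Summable (fun q : ℤ × ℤ => ‖ut q‖ ^ 2))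
    (hyC : Summable (fun q : ℤ × ℤ => yC q ⬝ᵥ QC.mulVec (yC q)))
    -- (a) incremental dissipativity of the convolutional part
    (ha : 0 ≤ γ ^ 2 * (∑' q : ℤ × ℤ, ‖ut q‖ ^ 2) +
      ∑' q : ℤ × ℤ, yC q ⬝ᵥ QC.mulVec (yC q))
    -- (b) incremental dissipativity of the linear part, with
    -- vᵀR_Lv = ∑_{i₁,i₂} ỹ_C(i₁,i₂)ᵀ(−Q_C)ỹ_C(i₁,i₂) for the flattening v of ỹ_C
    (hb : 0 ≤ (∑' q : ℤ × ℤ, yC q ⬝ᵥ (-QC).mulVec (yC q)) - ‖yL‖ ^ 2) :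
    0 ≤ γ ^ 2 * (∑' q : ℤ × ℤ, ‖ut q‖ ^ 2) - ‖yL‖ ^ 2 := by
  have h : (∑' q : ℤ × ℤ, yC q ⬝ᵥ (-QC).mulVec (yC q)) =
      -(∑' q : ℤ × ℤ, yC q ⬝ᵥ QC.mulVec (yC q)) := by
    rw [← tsum_neg]
    congr 1; funext q
    simp [Matrix.neg_mulVec, dotProduct_neg]
  rw [h] at hb
  linarith
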